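/- Collision bound for low-degree polynomials at a random point (used in the generic bilinear group analysis): let p be a prime, k ≥ 1, and let S be a finite set of N pairwise distinct multivariate polynomials in k variables over ZMod p, each of total degree at most 2. Then the number of points x ∈ (ZMod p)^k at which there exist two distinct polynomials P, Q ∈ S with P(x) = Q(x) is at most N²·p^(k−1); equivalently, the probability over a uniformly random x ∈ (ZMod p)^k that some two distinct members of S agree at x is at most N²/p. -/

import Mathlib

open MvPolynomial Finset

/-- Schwartz–Zippel over a finite field, multiplied-through form. -/
lemma sz_aux {F : Type*} [Field F] [Fintype F] [DecidableEq F] :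
    ∀ (n : ℕ) (f : MvPolynomial (Fin n) F), f ≠ 0 →
      (Finset.univ.filter fun x : Fin n → F => MvPolynomial.eval x f = 0).card * Fintype.card F
        ≤ f.totalDegree * Fintype.card F ^ n := by
  intro n
  induction n with
  | zero =>
    intro f hf
    obtain ⟨a, rfl⟩ := MvPolynomial.C_surjective (Fin 0) f
    have ha : a ≠ 0 := fun h => hf (by simp [h])
    have : (Finset.univ.filter fun x : Fin 0 → F => MvPolynomial.eval x (C a) = 0) = ∅ := by
      ext x; simp [ha]
    simp [this, ha]
  | succ n ih =>
    intro f hf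
    set q := Fintype.card F with hq
    set Fp := finSuccEquiv F n f with hFp
    have hFp0 : Fp ≠ 0 := by
      intro h
      exact hf ((map_eq_zero_iff _ (finSuccEquiv F n).injective).mp h)
    set d0 := Fp.natDegree with hd0
    set g := Fp.coeff d0 with hgdef
    have hg : g ≠ 0 := Polynomial.leadingCoeff_ne_zero.mpr hFp0
    have hdg : g.totalDegree + d0 ≤ f.totalDegree :=
      totalDegree_coeff_finSuccEquiv_add_le f d0 hg
    -- fiberwise decomposition over the tail
    have key : (Finset.univ.filter fun x : Fin (n+1) → F => MvPolynomial.eval x f = 0).card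
        = ∑ s : Fin n → F,
            (Finset.univ.filter fun y : F => MvPolynomial.eval (Fin.cons y s) f = 0).card := by
      rw [Finset.card_eq_sum_card_fiberwise
        (f := fun x : Fin (n+1) → F => Fin.tail x) (t := Finset.univ)
        (fun _ _ => Finset.mem_univ _)]
      refine Finset.sum_congr rfl fun s _ => ?_
      refine Finset.card_nbij (fun x => x 0) ?_ ?_ ?_
      · intro x hx
        simp only [Finset.mem_coe, Finset.mem_filter, Finset.mem_univ, true_and] at hx ⊢
        have : Fin.cons (x 0) s = x := by
          rw [← hx.2]; exact Fin.cons_self_tail x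
        rw [this]; exact hx.1
      · intro x hx x' hx' h
        have h0 : x 0 = x' 0 := h
        simp only [Finset.coe_filter, Set.mem_setOf_eq, Finset.mem_filter,
          Finset.mem_univ, true_and] at hx hx'
        rw [← Fin.cons_self_tail x, ← Fin.cons_self_tail x', h0, hx.2, hx'.2]
      · intro y hy
        simp only [Finset.coe_filter, Set.mem_setOf_eq, Finset.mem_filter,
          Finset.mem_univ, true_and] at hy
        refine ⟨Fin.cons y s, ?_, by simp⟩
        simp only [Finset.coe_filter, Set.mem_setOf_eq, Finset.mem_filter,
          Finset.mem_univ, true_and]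
        exact ⟨hy, by simp [Fin.tail_cons]⟩
    -- bound each fiber
    have fiber_bound : ∀ s : Fin n → F,
        (Finset.univ.filter fun y : F => MvPolynomial.eval (Fin.cons y s) f = 0).card
          ≤ if MvPolynomial.eval s g = 0 then q else d0 := by
      intro s
      by_cases hs : MvPolynomial.eval s g = 0
      · simp only [hs, if_pos rfl]
        exact (Finset.card_filter_le _ _).trans (by simp [hq])
      · simp only [hs, if_neg hs]
        set qs : Polynomial F := Fp.map (MvPolynomial.eval s) with hqs
        have hqs0 : qs ≠ 0 := by
          intro h
          have : qs.coeff d0 = 0 := by rw [h]; simp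
          rw [hqs, Polynomial.coeff_map] at this
          exact hs this
        have hdeg : qs.natDegree ≤ d0 := Polynomial.natDegree_map_le
        have hsub : (Finset.univ.filter fun y : F => MvPolynomial.eval (Fin.cons y s) f = 0)
            ⊆ qs.roots.toFinset := by
          intro y hy
          simp only [Finset.mem_filter, Finset.mem_univ, true_and] at hy
          rw [eval_eq_eval_mv_eval'] at hy
          rw [Multiset.mem_toFinset, Polynomial.mem_roots hqs0]
          exact hy
        calc (Finset.univ.filter fun y : F => MvPolynomial.eval (Fin.cons y s) f = 0).card
            ≤ qs.roots.toFinset.card := Finset.card_le_card hsub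
          _ ≤ Multiset.card qs.roots := qs.roots.toFinset_card_le
          _ ≤ qs.natDegree := Polynomial.card_roots' qs
          _ ≤ d0 := hdeg
    -- put it together
    set Zg := (Finset.univ.filter fun s : Fin n → F => MvPolynomial.eval s g = 0).card with hZg
    have sum_bound : ∑ s : Fin n → F,
        (Finset.univ.filter fun y : F => MvPolynomial.eval (Fin.cons y s) f = 0).card
          ≤ Zg * q + d0 * q ^ n := by
      calc ∑ s : Fin n → F, (Finset.univ.filter
              fun y : F => MvPolynomial.eval (Fin.cons y s) f = 0).card
          ≤ ∑ s : Fin n → F, (if MvPolynomial.eval s g = 0 then q else d0) :=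
            Finset.sum_le_sum fun s _ => fiber_bound s
        _ = Zg * q + (Finset.univ.filter
              fun s : Fin n → F => ¬ MvPolynomial.eval s g = 0).card * d0 := by
            rw [Finset.sum_ite, Finset.sum_const, Finset.sum_const]; simp [hZg, mul_comm]
        _ ≤ Zg * q + d0 * q ^ n := by
            have hc : (Finset.univ.filter
                fun s : Fin n → F => ¬ MvPolynomial.eval s g = 0).card ≤ q ^ n :=
              (Finset.card_filter_le _ _).trans (by simp [hq, Fintype.card_fun])
            have h2 : (Finset.univ.filter
                fun s : Fin n → F => ¬ MvPolynomial.eval s g = 0).card * d0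
                  ≤ d0 * q ^ n := by
              rw [mul_comm]; exact Nat.mul_le_mul_left _ hc
            exact Nat.add_le_add_left h2 _
    have ihg : Zg * q ≤ g.totalDegree * q ^ n := ih g hg
    calc (Finset.univ.filter fun x : Fin (n+1) → F => MvPolynomial.eval x f = 0).card * q
        ≤ (Zg * q + d0 * q ^ n) * q := by
          rw [key]; exact Nat.mul_le_mul_right q sum_bound
      _ = (Zg * q) * q + d0 * q ^ (n+1) := by ring
      _ ≤ (g.totalDegree * q ^ n) * q + d0 * q ^ (n+1) := by gcongr
      _ = (g.totalDegree + d0) * q ^ (n+1) := by ring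
      _ ≤ f.totalDegree * q ^ (n+1) := by gcongr

theorem stmt_18 {p : ℕ} (hp : p.Prime) (k : ℕ) (hk : 1 ≤ k) (N : ℕ)
    (S : Finset (MvPolynomial (Fin k) (ZMod p)))
    (hdeg : ∀ P ∈ S, P.totalDegree ≤ 2)
    (hN : S.card = N) :
    {x : Fin k → ZMod p | ∃ P ∈ S, ∃ Q ∈ S, P ≠ Q ∧
        MvPolynomial.eval x P = MvPolynomial.eval x Q}.ncard
      ≤ N ^ 2 * p ^ (k - 1) := by
  classical
  haveI : Fact p.Prime := ⟨hp⟩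
  letI : LinearOrder (MvPolynomial (Fin k) (ZMod p)) :=
    IsWellOrder.linearOrder WellOrderingRel
  set T : Finset (Fin k → ZMod p) :=
    Finset.univ.filter (fun x => ∃ P ∈ S, ∃ Q ∈ S, P ≠ Q ∧
        MvPolynomial.eval x P = MvPolynomial.eval x Q) with hT
  have hncard : {x : Fin k → ZMod p | ∃ P ∈ S, ∃ Q ∈ S, P ≠ Q ∧
        MvPolynomial.eval x P = MvPolynomial.eval x Q}.ncard = T.card := by
    rw [← Set.ncard_coe_finset]
    congr 1
    ext x
    simp [hT]
  rw [hncard]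
  set pairs : Finset (MvPolynomial (Fin k) (ZMod p) × MvPolynomial (Fin k) (ZMod p)) :=
    (S ×ˢ S).filter (fun z => z.1 < z.2) with hpairs
  set Z : MvPolynomial (Fin k) (ZMod p) × MvPolynomial (Fin k) (ZMod p) →
      Finset (Fin k → ZMod p) :=
    fun z => Finset.univ.filter (fun x => MvPolynomial.eval x (z.1 - z.2) = 0) with hZ
  have hsubset : T ⊆ pairs.biUnion Z := by
    intro x hx
    simp only [hT, Finset.mem_filter, Finset.mem_univ, true_and] at hx
    obtain ⟨P, hP, Q, hQ, hne, heq⟩ := hx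
    rcases lt_or_gt_of_ne hne with h | h
    · refine Finset.mem_biUnion.mpr ⟨(P, Q), ?_, ?_⟩
      · simp [hpairs, Finset.mem_product, hP, hQ, h]
      · simp [hZ, heq]
    · refine Finset.mem_biUnion.mpr ⟨(Q, P), ?_, ?_⟩
      · simp [hpairs, Finset.mem_product, hP, hQ, h]
      · simp [hZ, heq.symm]
  have hcardZ : ∀ z ∈ pairs, (Z z).card ≤ 2 * p ^ (k - 1) := by
    intro z hz
    simp only [hpairs, Finset.mem_filter, Finset.mem_product] at hz
    obtain ⟨⟨h1, h2⟩, hlt⟩ := hz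
    have hne : z.1 - z.2 ≠ 0 := sub_ne_zero.mpr (ne_of_lt hlt)
    have hd : (z.1 - z.2).totalDegree ≤ 2 :=
      (totalDegree_sub _ _).trans (max_le (hdeg _ h1) (hdeg _ h2))
    have hsz := sz_aux k (z.1 - z.2) hne
    have hcard : Fintype.card (ZMod p) = p := ZMod.card p
    rw [hcard] at hsz
    have : (Z z).card * p ≤ 2 * p ^ (k - 1) * p := by
      calc (Z z).card * p ≤ (z.1 - z.2).totalDegree * p ^ k := hsz
        _ ≤ 2 * p ^ k := by gcongr
        _ = 2 * p ^ (k - 1) * p := by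
            rw [mul_assoc, ← pow_succ, Nat.sub_add_cancel hk]
    exact Nat.le_of_mul_le_mul_right this hp.pos
  have hpairs_card : 2 * pairs.card ≤ N ^ 2 := by
    set pairs' := (S ×ˢ S).filter (fun z => z.2 < z.1) with hpairs'
    have hswap : pairs.card = pairs'.card := by
      refine Finset.card_nbij (fun z => (z.2, z.1)) ?_ ?_ ?_
      · intro z hz
        simp only [hpairs, hpairs', Finset.mem_coe, Finset.mem_filter, Finset.mem_product] at hz ⊢
        exact ⟨⟨hz.1.2, hz.1.1⟩, hz.2⟩
      · intro z _ z' _ h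
        simp only [Prod.mk.injEq] at h
        exact Prod.ext h.2 h.1
      · intro z hz
        simp only [hpairs, hpairs', Finset.coe_filter, Set.mem_setOf_eq, Set.mem_image,
          Finset.mem_product] at hz ⊢
        exact ⟨(z.2, z.1), ⟨⟨hz.1.2, hz.1.1⟩, hz.2⟩, by simp⟩
    have hdisj : Disjoint pairs pairs' := by
      rw [Finset.disjoint_left]
      intro z hz hz'
      simp only [hpairs, hpairs', Finset.mem_filter] at hz hz'
      exact absurd hz'.2 (not_lt_of_gt hz.2)
    have hunion : pairs.card + pairs'.card ≤ N ^ 2 := by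
      rw [← Finset.card_union_of_disjoint hdisj]
      calc (pairs ∪ pairs').card ≤ (S ×ˢ S).card := by
            apply Finset.card_le_card
            rw [Finset.union_subset_iff]
            exact ⟨Finset.filter_subset _ _, Finset.filter_subset _ _⟩
        _ = N ^ 2 := by rw [Finset.card_product, hN, sq]
    omega
  calc T.card ≤ (pairs.biUnion Z).card := Finset.card_le_card hsubset
    _ ≤ ∑ z ∈ pairs, (Z z).card := Finset.card_biUnion_le
    _ ≤ pairs.card * (2 * p ^ (k - 1)) := Finset.sum_le_card_nsmul _ _ _ hcardZ
    _ = 2 * pairs.card * p ^ (k - 1) := by ring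
    _ ≤ N ^ 2 * p ^ (k - 1) := by gcongr
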